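/- For a connected diamond graph Γ, all vertices have the same number of neighbors (i.e., Γ is regular). -/

import Mathlib

/-- A diamond graph: any path `a - b - c` with `a ≠ c` completes to a unique
fourth vertex `d ≠ b` forming a diamond, with `{a,c}` and `{b,d}` non-edges. -/
def SimpleGraph.IsDiamondGraph {V : Type*} (G : SimpleGraph V) : Prop :=
  ∀ a b c : V, G.Adj a b → G.Adj b c → a ≠ c →
    ∃! d : V, d ≠ b ∧ G.Adj a d ∧ G.Adj d c ∧ ¬ G.Adj a c ∧ ¬ G.Adj b d

private lemma diamond_adj_degree {V : Type*} [Fintype V] [DecidableEq V]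
    (G : SimpleGraph V) [DecidableRel G.Adj]
    (hd : G.IsDiamondGraph) {u v : V} (huv : G.Adj u v) :
    G.degree u = G.degree v := by
  have key : ((G.neighborFinset u).erase v).card
      = ((G.neighborFinset v).erase u).card := by
    apply Finset.card_bij
      (fun x hx => (hd x u v
        (G.adj_symm ((G.mem_neighborFinset u x).1 (Finset.mem_of_mem_erase hx))) huv
        (Finset.ne_of_mem_erase hx)).choose)
    · intro x hx
      obtain ⟨h1, h2, h3, h4, h5⟩ := (hd x u v
        (G.adj_symm ((G.mem_neighborFinset u x).1 (Finset.mem_of_mem_erase hx))) huv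
        (Finset.ne_of_mem_erase hx)).choose_spec.1
      exact Finset.mem_erase.2 ⟨h1, (G.mem_neighborFinset v _).2 (G.adj_symm h3)⟩
    · intro x1 hx1 x2 hx2 heq
      obtain ⟨h1, h2, h3, h4, h5⟩ := (hd x1 u v (G.adj_symm ((G.mem_neighborFinset u x1).1
        (Finset.mem_of_mem_erase hx1))) huv (Finset.ne_of_mem_erase hx1)).choose_spec.1
      obtain ⟨g1, g2, g3, g4, g5⟩ := (hd x2 u v (G.adj_symm ((G.mem_neighborFinset u x2).1
        (Finset.mem_of_mem_erase hx2))) huv (Finset.ne_of_mem_erase hx2)).choose_spec.1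
      rw [← heq] at g1 g2 g3 g5
      -- use uniqueness of diamond for path d1 - v - u
      have hdvu := hd _ v u h3 (G.adj_symm huv) h1
      have e1 : x1 = hdvu.choose := hdvu.unique
        ⟨Finset.ne_of_mem_erase hx1, G.adj_symm h2,
          G.adj_symm ((G.mem_neighborFinset u x1).1 (Finset.mem_of_mem_erase hx1)),
          fun h => h5 (G.adj_symm h), fun h => h4 (G.adj_symm h)⟩ (hdvu.choose_spec.1)
      have e2 : x2 = hdvu.choose := hdvu.unique
        ⟨Finset.ne_of_mem_erase hx2, G.adj_symm g2,
          G.adj_symm ((G.mem_neighborFinset u x2).1 (Finset.mem_of_mem_erase hx2)),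
          fun h => g5 (G.adj_symm h), fun h => g4 (G.adj_symm h)⟩ (hdvu.choose_spec.1)
      rw [e1, e2]
    · intro y hy
      have hyv : G.Adj v y := (G.mem_neighborFinset v y).1 (Finset.mem_of_mem_erase hy)
      have hyu : y ≠ u := Finset.ne_of_mem_erase hy
      obtain ⟨x, ⟨hx1, hx2, hx3, hx4, hx5⟩, _⟩ := hd y v u (G.adj_symm hyv) (G.adj_symm huv) hyu
      have hxmem : x ∈ (G.neighborFinset u).erase v :=
        Finset.mem_erase.2 ⟨hx1, (G.mem_neighborFinset u x).2 (G.adj_symm hx3)⟩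
      refine ⟨x, hxmem, ?_⟩
      have hxu : G.Adj x u := hx3
      have hspec := hd x u v (hxu) huv hx1
      exact hspec.unique hspec.choose_spec.1
        ⟨hyu, G.adj_symm hx2, G.adj_symm hyv, fun h => hx5 (G.adj_symm h),
          fun h => hx4 (G.adj_symm h)⟩
  have hu : v ∈ G.neighborFinset u := (G.mem_neighborFinset u v).2 huv
  have hv : u ∈ G.neighborFinset v := (G.mem_neighborFinset v u).2 (G.adj_symm huv)
  have c1 := Finset.card_erase_of_mem hu
  have c2 := Finset.card_erase_of_mem hv
  have p1 : 0 < (G.neighborFinset u).card := Finset.card_pos.2 ⟨v, hu⟩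
  have p2 : 0 < (G.neighborFinset v).card := Finset.card_pos.2 ⟨u, hv⟩
  simp only [SimpleGraph.degree]
  omega

/-- For a connected diamond graph, all vertices have the same number of
neighbors, i.e. the graph is regular. -/
theorem connected_diamond_graph_regular {V : Type*} [Fintype V] [DecidableEq V]
    (G : SimpleGraph V) [DecidableRel G.Adj]
    (hdiamond : G.IsDiamondGraph) (hconn : G.Connected) :
    ∀ u v : V, G.degree u = G.degree v := by
  intro u v
  obtain ⟨w⟩ := hconn u v
  induction w with
  | nil => rfl
  | cons h p ih => exact (diamond_adj_degree G hdiamond h).trans ih
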